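/- The sequence (μ_n)_{n≥0} of probability measures on the 1-torus 𝕋 = ℝ/ℤ converges weakly to a probability measure μ on 𝕋. -/

import Mathlib

open MeasureTheory Filter Topology Real
open scoped ENNReal

noncomputable section

/-- Stern's diatomic sequence: s(0)=0, s(1)=1, s(2n)=s(n), s(2n+1)=s(n)+s(n+1). -/
def stern : ℕ → ℕ
  | 0 => 0
  | 1 => 1
  | n + 2 =>
    if h : n % 2 = 0 then stern (n / 2 + 1)
    else stern (n / 2 + 1) + stern (n / 2 + 2)
decreasing_by all_goals omega
/-- The probability measure μ_n = 3^{-n} ∑_{m=0}^{2^n-1} s(2^n+m) δ_{m/2^n} on the 1-torus. -/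
def sternMeasure (n : ℕ) : Measure UnitAddCircle :=
  ((3 : ℝ≥0∞) ^ n)⁻¹ • ∑ m ∈ Finset.range (2 ^ n),
    (stern (2 ^ n + m) : ℝ≥0∞) • Measure.dirac ((m / 2 ^ n : ℝ) : UnitAddCircle)


lemma stern_zero : stern 0 = 0 := by rw [stern]
lemma stern_one : stern 1 = 1 := by rw [stern]

lemma stern_two_mul (n : ℕ) : stern (2 * n) = stern n := by
  match n with
  | 0 => rw [Nat.mul_zero]
  | n + 1 =>
    show stern (2 * n + 2) = _
    rw [stern, dif_pos (by omega)]
    congr 1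
    omega

lemma stern_two_mul_add_one (n : ℕ) : stern (2 * n + 1) = stern n + stern (n + 1) := by
  match n with
  | 0 => rw [stern_zero]; rw [Nat.mul_zero]; rw [Nat.zero_add, Nat.zero_add]
  | n + 1 =>
    show stern (2 * n + 1 + 2) = _
    rw [stern, dif_neg (by omega)]
    have h1 : (2 * n + 1) / 2 + 1 = n + 1 := by omega
    have h2 : (2 * n + 1) / 2 + 2 = n + 2 := by omega
    rw [h1, h2]

lemma stern_pos {n : ℕ} (h : n ≠ 0) : 0 < stern n := by
  induction n using Nat.strong_induction_on with
  | _ n ih =>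
    match n, h with
    | 1, _ => simp [stern_one]
    | n + 2, _ =>
      rcases Nat.even_or_odd (n + 2) with ⟨k, hk⟩ | ⟨k, hk⟩
      · have hk2 : n + 2 = 2 * k := by omega
        rw [hk2, stern_two_mul]
        exact ih k (by omega) (by omega)
      · have hk2 : n + 2 = 2 * k + 1 := by omega
        rw [hk2, stern_two_mul_add_one]
        have := ih (k+1) (by omega) (by omega)
        omega

lemma stern_one_le {n : ℕ} (h : n ≠ 0) : 1 ≤ stern n := stern_pos h

lemma stern_two_pow (n : ℕ) : stern (2 ^ n) = 1 := by
  induction n with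
  | zero => exact stern_one
  | succ n ih => rw [pow_succ, mul_comm, stern_two_mul]; exact ih

lemma stern_two_pow_mul (j t : ℕ) : stern (2 ^ j * t) = stern t := by
  induction j with
  | zero => rw [pow_zero, one_mul]
  | succ j ih => rw [pow_succ, mul_comm (2^j) 2, mul_assoc, stern_two_mul, ih]

lemma sum_range_two_mul {M : Type*} [AddCommMonoid M] (g : ℕ → M) (a : ℕ) :
    ∑ k ∈ Finset.range (2 * a), g k = ∑ j ∈ Finset.range a, (g (2 * j) + g (2 * j + 1)) := by
  induction a with
  | zero => simp
  | succ a ih =>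
    have h : 2 * (a + 1) = (2 * a + 1) + 1 := by ring
    rw [h, Finset.sum_range_succ, Finset.sum_range_succ, ih, Finset.sum_range_succ,
      add_assoc]

lemma sum_shift (g : ℕ → ℝ) (K : ℕ) :
    ∑ m ∈ Finset.range K, g (m + 1) = ∑ m ∈ Finset.range K, g m + g K - g 0 := by
  have h1 := Finset.sum_range_succ' g K
  have h2 := Finset.sum_range_succ g K
  rw [h2] at h1
  linarith

lemma sum_stern_row (n : ℕ) : ∑ m ∈ Finset.range (2 ^ n), stern (2 ^ n + m) = 3 ^ n := by
  induction n with
  | zero => simp [stern_one]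
  | succ n ih =>
    have h2 : (2:ℕ) ^ (n+1) = 2 * 2 ^ n := by ring
    rw [h2, sum_range_two_mul]
    have key : ∀ j ∈ Finset.range (2^n),
        stern (2*2^n + 2*j) + stern (2*2^n + (2*j+1))
          = 2 * stern (2^n + j) + stern (2^n + (j + 1)) := by
      intro j _
      have e1 : 2*2^n + 2*j = 2 * (2^n + j) := by ring
      have e2 : 2*2^n + (2*j+1) = 2 * (2^n + j) + 1 := by ring
      rw [e1, e2, stern_two_mul, stern_two_mul_add_one]
      have : 2 ^ n + j + 1 = 2 ^ n + (j + 1) := by omega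
      rw [this]
      ring
    rw [Finset.sum_congr rfl key, Finset.sum_add_distrib, ← Finset.mul_sum, ih]
    have h3 := Finset.sum_range_succ' (fun j => stern (2^n + j)) (2^n)
    have h4 := Finset.sum_range_succ (fun j => stern (2^n + j)) (2^n)
    rw [h4] at h3
    simp only [Nat.add_zero] at h3
    have h5 : stern (2^n + 2^n) = 1 := by
      have : 2^n + 2^n = 2^(n+1) := by ring
      rw [this, stern_two_pow]
    have h6 : stern (2^n) = 1 := stern_two_pow n
    -- h3 : ∑ j<2^n, stern (2^n + j) + stern (2^n+2^n) = ∑ j<2^n, stern (2^n+(j+1)) + stern (2^n)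
    have h7 : ∑ j ∈ Finset.range (2^n), stern (2^n + (j+1)) = 3 ^ n := by omega
    rw [h7]
    ring

lemma sum_stern_row_shift (n : ℕ) :
    ∑ m ∈ Finset.range (2 ^ n), stern (2 ^ n + (m + 1)) = 3 ^ n := by
  have h3 := Finset.sum_range_succ' (fun j => stern (2^n + j)) (2^n)
  have h4 := Finset.sum_range_succ (fun j => stern (2^n + j)) (2^n)
  rw [h4] at h3
  simp only [Nat.add_zero] at h3
  have h5 : stern (2^n + 2^n) = 1 := by
    have : 2^n + 2^n = 2^(n+1) := by ring
    rw [this, stern_two_pow]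
  have h6 : stern (2^n) = 1 := stern_two_pow n
  have := sum_stern_row n
  omega

def sternPhi (n m : ℕ) : ℝ :=
  ((3:ℝ) ^ n)⁻¹ * ((∑ k ∈ Finset.range m, (stern (2 ^ n + k) : ℝ))
    + ((stern (2 ^ n + m) : ℝ) - 1) / 2)

lemma sternPhi_zero (n : ℕ) : sternPhi n 0 = 0 := by
  simp [sternPhi, stern_two_pow]

lemma sternPhi_step (n m : ℕ) : sternPhi n (m + 1) = sternPhi n m
    + ((3:ℝ) ^ n)⁻¹ * (((stern (2 ^ n + m) : ℝ) + (stern (2 ^ n + (m+1)) : ℝ)) / 2) := by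
  simp only [sternPhi, Finset.sum_range_succ]
  ring

lemma sternPhi_nonneg (n m : ℕ) : 0 ≤ sternPhi n m := by
  apply mul_nonneg (by positivity)
  have h1 : (0:ℝ) ≤ ∑ k ∈ Finset.range m, (stern (2 ^ n + k) : ℝ) :=
    Finset.sum_nonneg fun k _ => by positivity
  have h2 : (1:ℝ) ≤ (stern (2 ^ n + m) : ℝ) := by
    exact_mod_cast stern_one_le (by positivity)
  linarith

lemma sternPhi_mono (n : ℕ) : Monotone (sternPhi n) := by
  apply monotone_nat_of_le_succ
  intro m
  rw [sternPhi_step]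
  have h2 : (0:ℝ) ≤ (stern (2 ^ n + m) : ℝ) + (stern (2 ^ n + (m+1)) : ℝ) := by positivity
  have : (0:ℝ) ≤ ((3:ℝ) ^ n)⁻¹ * (((stern (2 ^ n + m) : ℝ) + (stern (2 ^ n + (m+1)) : ℝ)) / 2) := by
    positivity
  linarith

lemma sternPhi_double (n m : ℕ) : sternPhi (n + 1) (2 * m) = sternPhi n m := by
  have hσ : ∑ k ∈ Finset.range (2 * m), (stern (2 ^ (n+1) + k) : ℝ)
      = 3 * (∑ k ∈ Finset.range m, (stern (2 ^ n + k) : ℝ)) + (stern (2 ^ n + m) : ℝ) - 1 := by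
    rw [sum_range_two_mul]
    have key : ∀ j ∈ Finset.range m,
        ((stern (2 ^ (n+1) + 2 * j) : ℝ) + (stern (2 ^ (n+1) + (2 * j + 1)) : ℝ))
          = 2 * (stern (2 ^ n + j) : ℝ) + (stern (2 ^ n + (j + 1)) : ℝ) := by
      intro j _
      have e1 : 2 ^ (n+1) + 2 * j = 2 * (2 ^ n + j) := by ring
      have e2 : 2 ^ (n+1) + (2 * j + 1) = 2 * (2 ^ n + j) + 1 := by ring
      rw [e1, e2, stern_two_mul, stern_two_mul_add_one]
      have : 2 ^ n + j + 1 = 2 ^ n + (j + 1) := by omega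
      rw [this]
      push_cast
      ring
    rw [Finset.sum_congr rfl key, Finset.sum_add_distrib, ← Finset.mul_sum]
    have hshift := sum_shift (fun j => (stern (2 ^ n + j) : ℝ)) m
    simp only [Nat.add_zero] at hshift
    rw [hshift, stern_two_pow]
    push_cast
    ring
  have hs : stern (2 ^ (n+1) + 2 * m) = stern (2 ^ n + m) := by
    have e1 : 2 ^ (n+1) + 2 * m = 2 * (2 ^ n + m) := by ring
    rw [e1, stern_two_mul]
  simp only [sternPhi, hσ, hs]
  have h3 : ((3:ℝ) ^ (n+1))⁻¹ = ((3:ℝ)^n)⁻¹ / 3 := by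
    rw [pow_succ]
    field_simp
  rw [h3]
  ring

lemma sternPhi_lift (n m j : ℕ) : sternPhi (n + j) (2 ^ j * m) = sternPhi n m := by
  induction j with
  | zero => simp
  | succ j ih =>
    have e : 2 ^ (j+1) * m = 2 * (2 ^ j * m) := by ring
    have e2 : n + (j + 1) = (n + j) + 1 := by omega
    rw [e, e2, sternPhi_double, ih]

lemma sternPhi_dyadic_mono {n m n' m' : ℕ} (h : (m:ℝ) / 2 ^ n ≤ (m':ℝ) / 2 ^ n') :
    sternPhi n m ≤ sternPhi n' m' := by
  have hidx : 2 ^ n' * m ≤ 2 ^ n * m' := by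
    have h2n : (0:ℝ) < 2 ^ n := by positivity
    have h2n' : (0:ℝ) < 2 ^ n' := by positivity
    rw [div_le_div_iff₀ h2n h2n'] at h
    have : ((2 ^ n' * m : ℕ) : ℝ) ≤ ((2 ^ n * m' : ℕ) : ℝ) := by push_cast; linarith
    exact_mod_cast this
  calc sternPhi n m = sternPhi (n + n') (2 ^ n' * m) := (sternPhi_lift n m n').symm
    _ ≤ sternPhi (n + n') (2 ^ n * m') := sternPhi_mono _ hidx
    _ = sternPhi n' m' := by rw [add_comm]; exact sternPhi_lift n' m' n

lemma stern_dyadic_succ (n m : ℕ) : ∀ j : ℕ,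
    stern (2 ^ (n+j) + (2 ^ j * m + 1)) = stern (2 ^ n + (m+1)) + j * stern (2 ^ n + m)
  | 0 => by norm_num
  | (j+1) => by
    have e : 2 ^ (n+(j+1)) + (2 ^ (j+1) * m + 1) = 2 * (2 ^ (n+j) + 2 ^ j * m) + 1 := by ring
    rw [e, stern_two_mul_add_one]
    have e2 : 2 ^ (n+j) + 2 ^ j * m = 2 ^ j * (2 ^ n + m) := by ring
    have e3 : 2 ^ (n+j) + 2 ^ j * m + 1 = 2 ^ (n+j) + (2 ^ j * m + 1) := by omega
    rw [e2, stern_two_pow_mul, ← e2, e3, stern_dyadic_succ n m j]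
    ring

/-- The set of values Φ(n,m) over dyadics m/2^n strictly greater than x. -/
def sternSet (x : ℝ) : Set ℝ :=
  {y | ∃ n m : ℕ, x < (m:ℝ) / 2 ^ n ∧ y = sternPhi n m}

lemma sternSet_nonempty (x : ℝ) : (sternSet x).Nonempty := by
  obtain ⟨m, hm⟩ := exists_nat_gt x
  exact ⟨sternPhi 0 m, 0, m, by simpa using hm, rfl⟩

lemma sternSet_bddBelow (x : ℝ) : BddBelow (sternSet x) := by
  refine ⟨0, ?_⟩
  rintro y ⟨n, m, _, rfl⟩
  exact sternPhi_nonneg n m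

def sternFAux (x : ℝ) : ℝ := sInf (sternSet x)

lemma sternFAux_mono : Monotone sternFAux := by
  intro x y hxy
  apply csInf_le_csInf (sternSet_bddBelow x) (sternSet_nonempty y)
  rintro z ⟨n, m, h, rfl⟩
  exact ⟨n, m, lt_of_le_of_lt hxy h, rfl⟩

lemma sternFAux_le {x : ℝ} {n m : ℕ} (h : x < (m:ℝ) / 2 ^ n) :
    sternFAux x ≤ sternPhi n m :=
  csInf_le (sternSet_bddBelow x) ⟨n, m, h, rfl⟩

lemma le_sternFAux {x : ℝ} {c : ℝ}
    (h : ∀ n m : ℕ, x < (m:ℝ) / 2 ^ n → c ≤ sternPhi n m) : c ≤ sternFAux x :=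
  le_csInf (sternSet_nonempty x) (by rintro y ⟨n, m, hy, rfl⟩; exact h n m hy)

lemma sternFAux_rightContinuous (x : ℝ) :
    ContinuousWithinAt sternFAux (Set.Ici x) x := by
  rw [ContinuousWithinAt, tendsto_order]
  constructor
  · intro a ha
    filter_upwards [self_mem_nhdsWithin] with y (hy : x ≤ y)
    exact lt_of_lt_of_le ha (sternFAux_mono hy)
  · intro b hb
    obtain ⟨z, hz, hzb⟩ := exists_lt_of_csInf_lt (sternSet_nonempty x) hb
    obtain ⟨n, m, hxm, rfl⟩ := hz
    have hmem : Set.Ico x ((m:ℝ)/2^n) ∈ 𝓝[≥] x := Ico_mem_nhdsGE_of_mem ⟨le_refl x, hxm⟩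
    filter_upwards [hmem] with y hy
    exact lt_of_le_of_lt (sternFAux_le hy.2) hzb

def sternF : StieltjesFunction ℝ where
  toFun := sternFAux
  mono' := sternFAux_mono
  right_continuous' := sternFAux_rightContinuous

lemma sternF_dyadic (n m : ℕ) : sternF ((m:ℝ) / 2 ^ n) = sternPhi n m := by
  apply le_antisymm
  · -- upper bound: use the points (2^j m + 1)/2^(n+j) ↓ m/2^n
    set s : ℝ := (stern (2 ^ n + m) : ℝ) with hs
    set s' : ℝ := (stern (2 ^ n + (m+1)) : ℝ) with hs'
    have hval : ∀ j : ℕ, sternPhi (n + j) (2 ^ j * m + 1)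
        = sternPhi n m + ((3:ℝ) ^ (n+j))⁻¹ * ((s + (s' + j * s)) / 2) := by
      intro j
      rw [sternPhi_step, sternPhi_lift]
      congr 2
      have e2 : 2 ^ (n+j) + 2 ^ j * m = 2 ^ j * (2 ^ n + m) := by ring
      rw [e2, stern_two_pow_mul, stern_dyadic_succ]
      push_cast
      ring
    have hle : ∀ j : ℕ, sternFAux ((m:ℝ)/2^n) ≤ sternPhi (n + j) (2 ^ j * m + 1) := by
      intro j
      apply sternFAux_le
      have h2n : (0:ℝ) < 2 ^ (n + j) := by positivity
      rw [lt_div_iff₀ h2n]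
      have : (m:ℝ) / 2 ^ n * 2 ^ (n + j) = (2 ^ j * m : ℕ) := by
        push_cast
        rw [pow_add]
        field_simp
      rw [this]
      exact_mod_cast Nat.lt_succ_self _
    have hs1 : (1:ℝ) ≤ s := by
      rw [hs, Nat.one_le_cast]
      exact stern_one_le (by positivity)
    have hs1' : (1:ℝ) ≤ s' := by
      rw [hs', Nat.one_le_cast]
      exact stern_one_le (by positivity)
    have htend : Tendsto (fun j : ℕ => sternPhi (n + j) (2 ^ j * m + 1)) atTop
        (𝓝 (sternPhi n m)) := by
      have h0 : Tendsto (fun j : ℕ => ((3:ℝ) ^ (n+j))⁻¹ * ((s + (s' + j * s)) / 2)) atTop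
          (𝓝 0) := by
        apply squeeze_zero (g := fun j : ℕ => ((s + s') * ((3:ℝ)^n)⁻¹) * ((2:ℝ)/3) ^ j)
        · intro j
          have : (0:ℝ) ≤ s + (s' + j * s) := by positivity
          positivity
        · intro j
          have hj : (j:ℝ) ≤ 2 ^ j := by
            exact_mod_cast (Nat.lt_two_pow_self (n := j)).le
          have h3 : ((3:ℝ) ^ (n+j))⁻¹ = ((3:ℝ)^n)⁻¹ * ((3:ℝ)^j)⁻¹ := by
            rw [pow_add, mul_inv]
          rw [h3]
          have h2j : (1:ℝ) ≤ 2 ^ j := one_le_pow₀ (by norm_num)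
          have key : (s + (s' + j * s)) / 2 ≤ (s + s') * 2 ^ j := by nlinarith
          calc ((3:ℝ)^n)⁻¹ * ((3:ℝ)^j)⁻¹ * ((s + (s' + j * s)) / 2)
              ≤ ((3:ℝ)^n)⁻¹ * ((3:ℝ)^j)⁻¹ * ((s + s') * 2 ^ j) := by
                apply mul_le_mul_of_nonneg_left key (by positivity)
            _ = (s + s') * ((3:ℝ)^n)⁻¹ * ((2:ℝ)/3) ^ j := by
                rw [div_pow]
                field_simp
        · have := (tendsto_pow_atTop_nhds_zero_of_lt_one
            (by norm_num : (0:ℝ) ≤ 2/3) (by norm_num : (2:ℝ)/3 < 1)).const_mul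
            ((s + s') * ((3:ℝ)^n)⁻¹)
          simpa using this
      have := tendsto_const_nhds (x := sternPhi n m) (f := atTop (α := ℕ)) |>.add h0
      simp only [add_zero] at this
      convert this using 2 with j
      exact hval j
    exact ge_of_tendsto' htend hle
  · apply le_sternFAux
    intro n' m' h
    exact sternPhi_dyadic_mono (le_of_lt h)

/-- The limit measure: pushforward of the Stieltjes measure of `sternF` on `(0,1]`. -/
def sternLimit : Measure UnitAddCircle :=
  (sternF.measure.restrict (Set.Ioc 0 1)).map (fun x : ℝ => (x : UnitAddCircle))

lemma continuous_toCircle : Continuous (fun x : ℝ => (x : UnitAddCircle)) :=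
  AddCircle.continuous_mk' 1

lemma dist_toCircle_le (a b : ℝ) :
    dist ((a : UnitAddCircle)) ((b : UnitAddCircle)) ≤ |a - b| := by
  rw [dist_eq_norm]
  have h : (a : UnitAddCircle) - (b : UnitAddCircle) = ((a - b : ℝ) : UnitAddCircle) := by
    norm_cast
  rw [h]
  simpa [Real.norm_eq_abs] using QuotientAddGroup.norm_mk_le_norm (S := AddSubgroup.zmultiples (1:ℝ)) (m := a-b)

lemma sternF_zero : sternF 0 = 0 := by
  have h := sternF_dyadic 0 0
  norm_num at h
  rw [h, sternPhi_zero]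

lemma stern_two : stern 2 = 1 := by
  have : (2:ℕ) = 2 * 1 := by norm_num
  rw [this, stern_two_mul, stern_one]

lemma sternPhi_zero_one : sternPhi 0 1 = 1 := by
  simp [sternPhi, stern_one, stern_two]

lemma sternPhi_top (n : ℕ) : sternPhi n (2 ^ n) = 1 := by
  have := sternPhi_lift 0 1 n
  simp only [Nat.zero_add, Nat.mul_one] at this
  rw [this, sternPhi_zero_one]

lemma sternF_one : sternF 1 = 1 := by
  have h := sternF_dyadic 0 1
  norm_num at h
  rw [h, sternPhi_zero_one]

instance sternLimit_prob : IsProbabilityMeasure sternLimit := by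
  constructor
  rw [sternLimit, Measure.map_apply continuous_toCircle.measurable MeasurableSet.univ,
    Set.preimage_univ, Measure.restrict_apply_univ, StieltjesFunction.measure_Ioc,
    sternF_one, sternF_zero]
  norm_num

lemma integral_sternMeasure (f : C(UnitAddCircle, ℝ)) (n : ℕ) :
    ∫ x, f x ∂(sternMeasure n) = ((3:ℝ) ^ n)⁻¹ *
      ∑ m ∈ Finset.range (2 ^ n),
        (stern (2 ^ n + m) : ℝ) * f (((m : ℝ) / 2 ^ n : ℝ) : UnitAddCircle) := by
  have hint : ∀ (c : ℕ) (x : UnitAddCircle),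
      Integrable f ((c : ℝ≥0∞) • Measure.dirac x) := by
    intro c x
    exact ((BoundedContinuousFunction.mkOfCompact f).integrable _).smul_measure
      (by exact ENNReal.natCast_ne_top c)
  rw [sternMeasure, integral_smul_measure, integral_finset_sum_measure
    (fun m _ => hint _ _)]
  have hterm : ∀ m ∈ Finset.range (2 ^ n),
      ∫ x, f x ∂((stern (2 ^ n + m) : ℝ≥0∞) • Measure.dirac ((m / 2 ^ n : ℝ) : UnitAddCircle))
        = (stern (2 ^ n + m) : ℝ) * f (((m : ℝ) / 2 ^ n : ℝ) : UnitAddCircle) := by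
    intro m _
    rw [integral_smul_measure, integral_dirac]
    simp [smul_eq_mul]
  rw [Finset.sum_congr rfl hterm]
  simp [smul_eq_mul, ENNReal.toReal_inv]

lemma biUnion_dyadic (n : ℕ) : ∀ K : ℕ,
    ⋃ m ∈ Finset.range K, Set.Ioc ((m:ℝ)/2^n) (((m:ℝ)+1)/2^n) = Set.Ioc 0 ((K:ℝ)/2^n)
  | 0 => by simp
  | (K+1) => by
    rw [Finset.range_add_one, Finset.set_biUnion_insert, biUnion_dyadic n K,
      Set.union_comm, Set.Ioc_union_Ioc_eq_Ioc (by positivity) (by gcongr; linarith)]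
    push_cast
    ring_nf

lemma integrableOn_circle (f : C(UnitAddCircle, ℝ)) (s : Set ℝ) (a b : ℝ) (hs : s ⊆ Set.Ioc a b) :
    IntegrableOn (fun x : ℝ => f (x : UnitAddCircle)) s sternF.measure := by
  apply IntegrableOn.mono_set ?_ hs
  exact (f.continuous.comp continuous_toCircle).integrableOn_Ioc

/-- The sequence (μ_n) of probability measures on the 1-torus converges weakly to a
probability measure μ: the integrals of every continuous test function converge. -/
theorem sternMeasure_weak_limit :
    ∃ μ : Measure UnitAddCircle, IsProbabilityMeasure μ ∧
      ∀ f : C(UnitAddCircle, ℝ),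
        Tendsto (fun n => ∫ x, f x ∂(sternMeasure n)) atTop (𝓝 (∫ x, f x ∂μ)) := by
  classical
  refine ⟨sternLimit, sternLimit_prob, fun f => ?_⟩
  rw [Metric.tendsto_atTop]
  intro ε hε
  obtain ⟨δ, hδpos, hδ⟩ := Metric.uniformContinuous_iff.mp
    (CompactSpace.uniformContinuous_of_continuous f.continuous) (ε/4) (by positivity)
  obtain ⟨n0, hn0⟩ := exists_pow_lt_of_lt_one hδpos (by norm_num : (1:ℝ)/2 < 1)
  refine ⟨n0, fun n hn => ?_⟩
  have hscale : (1:ℝ)/2^n < δ := by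
    calc (1:ℝ)/2^n = ((1:ℝ)/2)^n := by rw [div_pow, one_pow]
      _ ≤ ((1:ℝ)/2)^n0 := pow_le_pow_of_le_one (by norm_num) (by norm_num) hn
      _ < δ := hn0
  set K := 2 ^ n with hK
  set x : ℕ → UnitAddCircle := fun m => (((m:ℝ) / 2 ^ n : ℝ) : UnitAddCircle) with hx
  set s : ℕ → ℝ := fun m => (stern (2 ^ n + m) : ℝ) with hsdef
  set w : ℕ → ℝ := fun m => sternPhi n (m+1) - sternPhi n m with hw
  set S := ∑ m ∈ Finset.range K, f (x m) * w m with hS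
  have hosc : ∀ a b : ℝ, |a - b| ≤ 1/2^n →
      |f ((a : UnitAddCircle)) - f ((b : UnitAddCircle))| ≤ ε/4 := by
    intro a b hab
    have hd : dist ((a:UnitAddCircle)) ((b:UnitAddCircle)) < δ :=
      lt_of_le_of_lt ((dist_toCircle_le a b).trans hab) hscale
    have := hδ hd
    rw [Real.dist_eq] at this
    exact this.le
  have hwnn : ∀ m, 0 ≤ w m := fun m => sub_nonneg.mpr (sternPhi_mono n (Nat.le_succ m))
  have hcellmeas : ∀ m : ℕ,
      sternF.measure (Set.Ioc ((m:ℝ)/2^n) (((m:ℝ)+1)/2^n)) = ENNReal.ofReal (w m) := by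
    intro m
    rw [StieltjesFunction.measure_Ioc]
    congr 1
    have h1 : ((m:ℝ)+1)/2^n = (((m+1:ℕ)):ℝ)/2^n := by push_cast; ring
    rw [h1, sternF_dyadic, sternF_dyadic]
  -- Part A : the limit integral is close to S
  have hL : ∫ z, f z ∂sternLimit
      = ∫ y in Set.Ioc (0:ℝ) 1, f ((y : UnitAddCircle)) ∂sternF.measure := by
    rw [sternLimit, integral_map continuous_toCircle.measurable.aemeasurable
      f.continuous.aestronglyMeasurable]
  have hsplit : ∫ y in Set.Ioc (0:ℝ) 1, f ((y : UnitAddCircle)) ∂sternF.measure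
      = ∑ m ∈ Finset.range K,
          ∫ y in Set.Ioc ((m:ℝ)/2^n) (((m:ℝ)+1)/2^n), f ((y : UnitAddCircle)) ∂sternF.measure := by
    have hu := biUnion_dyadic n K
    have hK1 : ((K:ℝ)/2^n) = 1 := by rw [hK]; push_cast; field_simp
    rw [hK1] at hu
    rw [← hu]
    apply integral_biUnion_finset
    · intro i _; exact measurableSet_Ioc
    · intro i _ j _ hij
      simp only [Function.onFun]
      rw [Set.Ioc_disjoint_Ioc]
      rcases lt_or_gt_of_ne hij with h | h
      · calc min (((i:ℝ)+1)/2^n) (((j:ℝ)+1)/2^n) ≤ ((i:ℝ)+1)/2^n := min_le_left _ _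
          _ ≤ (j:ℝ)/2^n := by
              gcongr
              · exact_mod_cast Nat.succ_le_of_lt h
          _ ≤ max ((i:ℝ)/2^n) ((j:ℝ)/2^n) := le_max_right _ _
      · calc min (((i:ℝ)+1)/2^n) (((j:ℝ)+1)/2^n) ≤ ((j:ℝ)+1)/2^n := min_le_right _ _
          _ ≤ (i:ℝ)/2^n := by
              gcongr
              · exact_mod_cast Nat.succ_le_of_lt h
          _ ≤ max ((i:ℝ)/2^n) ((j:ℝ)/2^n) := le_max_left _ _
    · intro i _
      exact integrableOn_circle f _ _ _ (subset_refl _)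
  have hcell : ∀ m ∈ Finset.range K,
      |(∫ y in Set.Ioc ((m:ℝ)/2^n) (((m:ℝ)+1)/2^n), f ((y : UnitAddCircle)) ∂sternF.measure)
        - f (x m) * w m| ≤ ε/4 * w m := by
    intro m _
    set I : Set ℝ := Set.Ioc ((m:ℝ)/2^n) (((m:ℝ)+1)/2^n) with hI
    haveI hfin : IsFiniteMeasure (sternF.measure.restrict I) := by
      constructor
      rw [Measure.restrict_apply_univ, hcellmeas m]
      exact ENNReal.ofReal_lt_top
    have hInt : IntegrableOn (fun y : ℝ => f ((y : UnitAddCircle))) I sternF.measure :=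
      integrableOn_circle f _ _ _ (subset_refl _)
    have hμI : (sternF.measure.restrict I (Set.univ : Set ℝ)).toReal = w m := by
      rw [Measure.restrict_apply_univ, hcellmeas m, ENNReal.toReal_ofReal (hwnn m)]
    have hconst : ∫ _ in I, f (x m) ∂sternF.measure = w m * f (x m) := by
      rw [setIntegral_const, hI, measureReal_def, hcellmeas m, ENNReal.toReal_ofReal (hwnn m), smul_eq_mul]
    have hrw : (∫ y in I, f ((y : UnitAddCircle)) ∂sternF.measure) - f (x m) * w m
        = ∫ y in I, (f ((y : UnitAddCircle)) - f (x m)) ∂sternF.measure := by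
      have hconstInt : IntegrableOn (fun _ : ℝ => f (x m)) I sternF.measure :=
        integrableOn_const (by rw [hI, hcellmeas m]; exact ENNReal.ofReal_ne_top)
      rw [integral_sub hInt hconstInt, hconst]
      ring
    rw [hrw]
    have hae : ∀ᵐ (y : ℝ) ∂(sternF.measure.restrict I),
        ‖f ((y : UnitAddCircle)) - f (x m)‖ ≤ ε/4 := by
      apply ae_restrict_of_forall_mem measurableSet_Ioc
      intro y hy
      rw [Real.norm_eq_abs]
      apply hosc
      have h1 : (m:ℝ)/2^n < y := hy.1
      have h2 : y ≤ ((m:ℝ)+1)/2^n := hy.2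
      rw [abs_le]
      have e : ((m:ℝ)+1)/2^n - (m:ℝ)/2^n = 1/2^n := by ring
      constructor
      · linarith [one_div_pos.mpr (pow_pos (by norm_num : (0:ℝ) < 2) n)]
      · linarith
    have := norm_integral_le_of_norm_le_const hae
    rw [measureReal_def, hμI] at this
    simpa [Real.norm_eq_abs] using this
  have hLS : |(∫ z, f z ∂sternLimit) - S| ≤ ε/4 := by
    rw [hL, hsplit, hS, ← Finset.sum_sub_distrib]
    calc |∑ m ∈ Finset.range K,
          ((∫ y in Set.Ioc ((m:ℝ)/2^n) (((m:ℝ)+1)/2^n), f ((y : UnitAddCircle)) ∂sternF.measure)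
            - f (x m) * w m)|
        ≤ ∑ m ∈ Finset.range K,
          |(∫ y in Set.Ioc ((m:ℝ)/2^n) (((m:ℝ)+1)/2^n), f ((y : UnitAddCircle)) ∂sternF.measure)
            - f (x m) * w m| := Finset.abs_sum_le_sum_abs _ _
      _ ≤ ∑ m ∈ Finset.range K, ε/4 * w m := Finset.sum_le_sum hcell
      _ = ε/4 * (sternPhi n K - sternPhi n 0) := by
          rw [← Finset.sum_range_sub (sternPhi n) K, Finset.mul_sum]
      _ = ε/4 := by rw [hK, sternPhi_top, sternPhi_zero]; ring
  -- Part B : the discrete integral is close to S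
  have hIn := integral_sternMeasure f n
  have hstep : ∀ m : ℕ, w m = ((3:ℝ)^n)⁻¹ * ((s m + s (m+1))/2) := by
    intro m
    rw [hw]
    simp only [sternPhi_step]
    ring
  have hxK : x K = x 0 := by
    have h0 : ((0:ℕ):ℝ)/2^n = (0:ℝ) := by norm_num
    have h1 : ((K:ℕ):ℝ)/2^n = (1:ℝ) := by rw [hK]; push_cast; field_simp
    rw [hx]
    simp only [h0, h1]
    rw [show ((1:ℝ) : UnitAddCircle) = 0 from AddCircle.coe_period 1]
    norm_cast
  have hsK : s K = 1 := by
    rw [hsdef, hK]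
    have : (2:ℕ)^n + 2^n = 2^(n+1) := by ring
    simp only [this, stern_two_pow, Nat.cast_one]
  have hs0 : s 0 = 1 := by
    rw [hsdef]
    simp only [Nat.add_zero, stern_two_pow, Nat.cast_one]
  have habel : ∑ m ∈ Finset.range K, f (x m) * (s m - s (m+1))
      = ∑ m ∈ Finset.range K, (f (x (m+1)) - f (x m)) * s (m+1) := by
    have hshift := sum_shift (fun m => f (x m) * s m) K
    have expand : ∀ m ∈ Finset.range K, f (x m) * (s m - s (m+1))
        = (f (x m) * s m - f (x (m+1)) * s (m+1))
          + (f (x (m+1)) - f (x m)) * s (m+1) := by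
      intro m _
      ring
    rw [Finset.sum_congr rfl expand, Finset.sum_add_distrib]
    have htel : ∑ m ∈ Finset.range K, (f (x m) * s m - f (x (m+1)) * s (m+1)) = 0 := by
      have := Finset.sum_range_sub (fun m => f (x m) * s m) K
      rw [Finset.sum_sub_distrib]
      rw [show (∑ m ∈ Finset.range K, f (x (m+1)) * s (m+1))
          = ∑ m ∈ Finset.range K, (fun m => f (x m) * s m) (m+1) from rfl, hshift]
      simp only [hxK, hsK, hs0]
      ring
    rw [htel, zero_add]
  have hrow : ∑ m ∈ Finset.range K, s (m+1) = 3^n := by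
    rw [hsdef, hK]
    have := sum_stern_row_shift n
    push_cast [← this]
    norm_cast
  have habel_bound : |∑ m ∈ Finset.range K, (f (x (m+1)) - f (x m)) * s (m+1)| ≤ ε/4 * 3^n := by
    calc |∑ m ∈ Finset.range K, (f (x (m+1)) - f (x m)) * s (m+1)|
        ≤ ∑ m ∈ Finset.range K, |(f (x (m+1)) - f (x m)) * s (m+1)| :=
          Finset.abs_sum_le_sum_abs _ _
      _ ≤ ∑ m ∈ Finset.range K, ε/4 * s (m+1) := by
          apply Finset.sum_le_sum
          intro m _
          rw [abs_mul]
          have hsnn : (0:ℝ) ≤ s (m+1) := by rw [hsdef]; positivity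
          rw [abs_of_nonneg hsnn]
          apply mul_le_mul_of_nonneg_right ?_ hsnn
          have : |((m:ℝ)+1)/2^n - (m:ℝ)/2^n| ≤ 1/2^n := by
            rw [show ((m:ℝ)+1)/2^n - (m:ℝ)/2^n = 1/2^n by ring]
            rw [abs_of_nonneg (by positivity)]
          have h := hosc (((m:ℝ)+1)/2^n) ((m:ℝ)/2^n) this
          have hcast : (((m+1:ℕ)):ℝ)/2^n = ((m:ℝ)+1)/2^n := by push_cast; ring
          rw [hx]
          simp only [hcast]
          exact h
      _ = ε/4 * 3^n := by rw [← Finset.mul_sum, hrow]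
  have hSdiff : |(∫ z, f z ∂sternMeasure n) - S| ≤ ε/8 := by
    have hdiff : (∫ z, f z ∂sternMeasure n) - S
        = ((3:ℝ)^n)⁻¹/2 * ∑ m ∈ Finset.range K, f (x m) * (s m - s (m+1)) := by
      rw [hIn, hS, Finset.mul_sum, Finset.mul_sum, ← Finset.sum_sub_distrib]
      apply Finset.sum_congr rfl
      intro m _
      rw [hstep m]
      have : (stern (2 ^ n + m) : ℝ) = s m := by rw [hsdef]
      rw [hK] at *
      rw [this]
      ring
    rw [hdiff, habel, abs_mul]
    have h3n : (0:ℝ) < (3:ℝ)^n := by positivity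
    calc |((3:ℝ)^n)⁻¹/2| * |∑ m ∈ Finset.range K, (f (x (m+1)) - f (x m)) * s (m+1)|
        ≤ ((3:ℝ)^n)⁻¹/2 * (ε/4 * 3^n) := by
          rw [abs_of_nonneg (by positivity)]
          exact mul_le_mul_of_nonneg_left habel_bound (by positivity)
      _ = ε/8 := by field_simp; ring
  -- combine
  rw [Real.dist_eq]
  calc |(∫ z, f z ∂sternMeasure n) - ∫ z, f z ∂sternLimit|
      ≤ |(∫ z, f z ∂sternMeasure n) - S| + |S - ∫ z, f z ∂sternLimit| := abs_sub_le _ _ _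
    _ ≤ ε/8 + ε/4 := by
        refine add_le_add hSdiff ?_
        rw [abs_sub_comm]
        exact hLS
    _ < ε := by linarith
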